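/- arXiv:1402.3903 — 3 statements merged into one kernel-verified Lean document; each statement's English description precedes it below -/
import Mathlib

section
/- Let 0 < q < 1, let f: ℂ → ℂ be an entire function with Taylor expansion f(x) = Σ_{n≥0} a_n x^n, and define the entire function ψ(ξ) = Σ_{n≥0} a_n q^{n(n−1)/2} ξ^n (the q-Borel transform of f). Then for every λ ∈ ℂ∖{0} and every x ∈ ℂ∖{0} with x ∉ {−λ q^k : k ∈ ℤ}, the bilateral series Σ_{n∈ℤ} ψ(λ q^n)/θ_q(λ q^n / x) converges absolutely and its sum equals f(x). -/
open Complex Filter Topology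

/-- The q-shifted factorial `(a;q)_n`. -/
noncomputable def qPoch (q a : ℂ) (n : ℕ) : ℂ := ∏ k ∈ Finset.range n, (1 - a * q ^ k)

/-- The infinite q-shifted factorial `(a;q)_∞`. -/
noncomputable def qPochInf (q a : ℂ) : ℂ := ∏' k : ℕ, (1 - a * q ^ k)

/-- The Jacobi theta function `θ_q(x) = Σ_{n∈ℤ} q^{n(n-1)/2} x^n`. -/
noncomputable def jTheta (q : ℝ) (x : ℂ) : ℂ := ∑' n : ℤ, (q : ℂ) ^ (n * (n - 1) / 2) * x ^ n

/-- The basic hypergeometric series `₃φ₂(a₁,a₂,a₃;b₁,b₂;q,x)`. -/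
noncomputable def phi32 (q a₁ a₂ a₃ b₁ b₂ x : ℂ) : ℂ :=
  ∑' n : ℕ, (qPoch q a₁ n * qPoch q a₂ n * qPoch q a₃ n) /
    (qPoch q b₁ n * qPoch q b₂ n * qPoch q q n) * x ^ n

/-- The basic hypergeometric series `₂φ₂(a₁,a₂;b₁,b₂;q,x)`. -/
noncomputable def phi22 (q a₁ a₂ b₁ b₂ x : ℂ) : ℂ :=
  ∑' n : ℕ, (qPoch q a₁ n * qPoch q a₂ n) /
    (qPoch q b₁ n * qPoch q b₂ n * qPoch q q n) * (-1) ^ n * q ^ (n * (n - 1) / 2) * x ^ n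


private lemma eE (n : ℤ) : 2 * (n * (n - 1) / 2) = n * (n - 1) := by
  apply Int.mul_ediv_cancel'
  have h : Even ((n-1) * (n - 1 + 1)) := Int.even_mul_succ_self (n-1)
  have h2 : Even (n * (n-1)) := by rw [mul_comm]; simpa using h
  exact h2.two_dvd

private lemma eAdd (n m : ℤ) :
    (n + m) * (n + m - 1) / 2 = n * (n - 1) / 2 + m * (m - 1) / 2 + n * m := by
  apply mul_left_cancel₀ (two_ne_zero (α := ℤ))
  rw [eE, mul_add, mul_add, eE, eE]; ring

private lemma eCast (n : ℕ) : ((n * (n - 1) / 2 : ℕ) : ℤ) = (n : ℤ) * ((n : ℤ) - 1) / 2 := by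
  cases n with
  | zero => simp
  | succ k =>
    apply mul_left_cancel₀ (two_ne_zero (α := ℤ))
    rw [eE]
    have hd : 2 ∣ (k+1) * ((k+1) - 1) := by
      have : Even ((k+1) * ((k+1) - 1)) := by
        simpa [Nat.succ_sub_one, mul_comm] using Nat.even_mul_succ_self k
      exact this.two_dvd
    rw [← Nat.cast_ofNat, ← Nat.cast_mul, Nat.mul_div_cancel' hd]
    push_cast [Nat.succ_sub_one]
    ring

private lemma eNonnegNat (n : ℕ) : (0:ℤ) ≤ (n : ℤ) * ((n : ℤ) - 1) / 2 := by
  rw [← eCast]; positivity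

private lemma summable_thetaR (q r : ℝ) (hq0 : 0 < q) (hq1 : q < 1) (hr : 0 < r) :
    Summable (fun n : ℤ => q ^ (n * (n - 1) / 2) * r ^ n) := by
  have hqne : q ≠ 0 := hq0.ne'
  apply Summable.of_nat_of_neg
  · apply summable_of_ratio_norm_eventually_le (r := 1/2) (by norm_num)
    have h : Tendsto (fun n : ℕ => q ^ n * r) atTop (𝓝 (0 * r)) :=
      (tendsto_pow_atTop_nhds_zero_of_lt_one hq0.le hq1).mul_const r
    rw [zero_mul] at h
    filter_upwards [h.eventually (eventually_le_nhds (by norm_num : (0:ℝ) < 1/2))] with n hn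
    have key : q ^ (((n:ℤ)+1) * (((n:ℤ)+1) - 1) / 2) * r ^ ((n:ℤ)+1)
        = (q ^ ((n:ℤ) * ((n:ℤ)-1)/2) * r ^ (n:ℤ)) * (q ^ n * r) := by
      have h1 : ((n:ℤ)+1) * (((n:ℤ)+1) - 1)/2 = (n:ℤ) * ((n:ℤ)-1)/2 + n := by
        have := eAdd (n:ℤ) 1; simpa using this
      rw [h1, zpow_add₀ hqne, zpow_add₀ hr.ne', zpow_one, zpow_natCast]
      ring
    have hcast : ((n:ℤ)+1) = ((n+1 : ℕ) : ℤ) := by push_cast; ring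
    rw [← hcast] at *
    push_cast
    rw [key, norm_mul, mul_comm]
    have hnorm : ‖q ^ n * r‖ = q ^ n * r := Real.norm_of_nonneg (by positivity)
    rw [hnorm]
    exact mul_le_mul_of_nonneg_right hn (norm_nonneg _)
  · apply summable_of_ratio_norm_eventually_le (r := 1/2) (by norm_num)
    have h : Tendsto (fun n : ℕ => q ^ (n+1) / r) atTop (𝓝 (0 / r)) := by
      apply Tendsto.div_const
      exact (tendsto_pow_atTop_nhds_zero_of_lt_one hq0.le hq1).comp (tendsto_add_atTop_nat 1)
    rw [zero_div] at h
    filter_upwards [h.eventually (eventually_le_nhds (by norm_num : (0:ℝ) < 1/2))] with n hn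
    have key : q ^ ((-((n:ℤ)+1)) * ((-((n:ℤ)+1)) - 1) / 2) * r ^ (-((n:ℤ)+1))
        = (q ^ ((-(n:ℤ)) * ((-(n:ℤ))-1)/2) * r ^ (-(n:ℤ))) * (q ^ (n+1) / r) := by
      have e1 : (-((n:ℤ)+1)) * ((-((n:ℤ)+1)) - 1)/2 = (-(n:ℤ)) * ((-(n:ℤ))-1)/2 + ((n:ℤ)+1) := by
        have h3 := eAdd (-(n:ℤ)) (-1)
        have h2 : (-(n:ℤ)) + (-1) = -((n:ℤ)+1) := by ring
        rw [h2] at h3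
        rw [h3]
        have : ((-1:ℤ)) * ((-1:ℤ) - 1) / 2 = 1 := by decide
        rw [this]
        ring
      rw [e1, zpow_add₀ hqne, neg_add, zpow_add₀ hr.ne', zpow_neg_one,
        show ((n:ℤ)+1) = ((n+1 : ℕ) : ℤ) by push_cast; ring, zpow_natCast]
      field_simp
    push_cast
    rw [key, norm_mul, mul_comm]
    have hnorm : ‖q ^ (n+1) / r‖ = q ^ (n+1) / r := Real.norm_of_nonneg (by positivity)
    rw [hnorm]
    exact mul_le_mul_of_nonneg_right hn (norm_nonneg _)


private lemma geom_bound (q : ℝ) (h0 : 0 ≤ q) (h1 : q < 1) (t : ℕ) :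
    ∑ k ∈ Finset.range t, q^k ≤ 1/(1-q) := by
  have hsum : Summable (fun k : ℕ => q ^ k) := summable_geometric_of_lt_one h0 h1
  calc ∑ k ∈ Finset.range t, q^k ≤ ∑' k : ℕ, q ^ k :=
        Summable.sum_le_tsum _ (fun i _ => by positivity) hsum
    _ = (1-q)⁻¹ := tsum_geometric_of_lt_one h0 h1
    _ = 1/(1-q) := by rw [one_div]

private lemma prod_one_sub_ge {ι : Type*} (s : Finset ι) (f : ι → ℝ)
    (h0 : ∀ i ∈ s, 0 ≤ f i) (h1 : ∀ i ∈ s, f i ≤ 1) :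
    1 - ∑ i ∈ s, f i ≤ ∏ i ∈ s, (1 - f i) := by
  induction s using Finset.cons_induction with
  | empty => simp
  | cons a s ha ih =>
    rw [Finset.prod_cons, Finset.sum_cons]
    have h0' : ∀ i ∈ s, 0 ≤ f i := fun i hi => h0 i (Finset.mem_cons_of_mem hi)
    have h1' : ∀ i ∈ s, f i ≤ 1 := fun i hi => h1 i (Finset.mem_cons_of_mem hi)
    have ihs := ih h0' h1'
    have hprod : (0:ℝ) ≤ ∏ i ∈ s, (1 - f i) :=
      Finset.prod_nonneg (fun i hi => by linarith [h1' i hi])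
    have hsum : 0 ≤ ∑ i ∈ s, f i := Finset.sum_nonneg h0'
    have ha0 := h0 a (Finset.mem_cons_self a s)
    have ha1 := h1 a (Finset.mem_cons_self a s)
    nlinarith

private lemma norm_prod_one_add_ge {ι : Type*} (s : Finset ι) (g : ι → ℂ)
    (h1 : ∀ i ∈ s, ‖g i‖ ≤ 1) :
    1 - ∑ i ∈ s, ‖g i‖ ≤ ‖∏ i ∈ s, (1 + g i)‖ := by
  rw [norm_prod]
  refine le_trans (prod_one_sub_ge s (fun i => ‖g i‖) (fun i _ => norm_nonneg _) h1) ?_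
  apply Finset.prod_le_prod
  · intro i hi; linarith [h1 i hi]
  · intro i hi
    have : (1:ℝ) = ‖(1 + g i) + (-g i)‖ := by norm_num
    have h := norm_add_le (1 + g i) (-g i)
    rw [← this] at h
    simp only [norm_neg] at h
    linarith

/-- `(q;q)_n` as a real number. -/
private noncomputable def Qp (q : ℝ) (n : ℕ) : ℝ := ∏ k ∈ Finset.range n, (1 - q^(k+1))

private lemma Qp_pos (q : ℝ) (hq0 : 0 < q) (hq1 : q < 1) (n : ℕ) : 0 < Qp q n :=
  Finset.prod_pos (fun k _ => by
    have : q ^ (k+1) ≤ q ^ 1 := pow_le_pow_of_le_one hq0.le hq1.le (by omega)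
    simp only [pow_one] at this; linarith)

private lemma Qp_le_one (q : ℝ) (hq0 : 0 < q) (hq1 : q < 1) (n : ℕ) : Qp q n ≤ 1 := by
  apply Finset.prod_le_one
  · intro k _
    have : q ^ (k+1) ≤ q ^ 1 := pow_le_pow_of_le_one hq0.le hq1.le (by omega)
    simp only [pow_one] at this; linarith
  · intro k _
    have : 0 < q ^ (k+1) := by positivity
    linarith

private lemma Qp_antitone (q : ℝ) (hq0 : 0 < q) (hq1 : q < 1) : Antitone (Qp q) := by
  apply antitone_nat_of_succ_le
  intro n
  rw [Qp, Finset.prod_range_succ]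
  have h1 : 0 < Qp q n := Qp_pos q hq0 hq1 n
  have h2 : 0 < q ^ (n+1) := by positivity
  calc Qp q n * (1 - q^(n+1)) ≤ Qp q n * 1 := by nlinarith
    _ = Qp q n := mul_one _

/-- uniform positive lower bound for `(q;q)_n`. -/
private lemma Qp_lb (q : ℝ) (hq0 : 0 < q) (hq1 : q < 1) :
    ∃ c > 0, ∀ n, c ≤ Qp q n := by
  obtain ⟨K, hK⟩ : ∃ K : ℕ, q ^ (K+1) / (1-q) ≤ 1/2 := by
    have h : Tendsto (fun K : ℕ => q ^ (K+1) / (1-q)) atTop (𝓝 (0 / (1-q))) :=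
      ((tendsto_pow_atTop_nhds_zero_of_lt_one hq0.le hq1).comp
        (tendsto_add_atTop_nat 1)).div_const _
    rw [zero_div] at h
    exact (h.eventually (eventually_le_nhds (by norm_num : (0:ℝ) < 1/2))).exists
  refine ⟨Qp q K / 2, half_pos (Qp_pos q hq0 hq1 K), fun n => ?_⟩
  rcases le_or_gt n K with h | h
  · have := Qp_antitone q hq0 hq1 h
    have := Qp_pos q hq0 hq1 K
    linarith
  · obtain ⟨t, rfl⟩ : ∃ t, n = K + t := ⟨n - K, by omega⟩
    have hsplit : Qp q (K+t) = Qp q K * ∏ k ∈ Finset.range t, (1 - q^(K + k + 1)) := by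
      rw [Qp, Qp, Finset.prod_range_add]
    have htail : 1/2 ≤ ∏ k ∈ Finset.range t, (1 - q^(K + k + 1)) := by
      refine le_trans ?_ (prod_one_sub_ge _ _ (fun i _ => by positivity) (fun i _ => ?_))
      · have hs : ∑ k ∈ Finset.range t, q^(K+k+1) ≤ q^(K+1)/(1-q) := by
          have : ∀ k, q^(K+k+1) = q^(K+1) * q^k := fun k => by rw [← pow_add]; ring_nf
          calc ∑ k ∈ Finset.range t, q^(K+k+1)
              = q^(K+1) * ∑ k ∈ Finset.range t, q^k := by
                rw [Finset.mul_sum]; exact Finset.sum_congr rfl (fun k _ => this k)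
            _ ≤ q^(K+1) * (1/(1-q)) := by
                apply mul_le_mul_of_nonneg_left (geom_bound q hq0.le hq1 t) (by positivity)
            _ = q^(K+1)/(1-q) := by ring
        linarith
      · have : q ^ (K+i+1) ≤ q ^ 1 := pow_le_pow_of_le_one hq0.le hq1.le (by omega)
        simp only [pow_one] at this; linarith
    have hQK := Qp_pos q hq0 hq1 K
    rw [hsplit]
    calc Qp q K / 2 = Qp q K * (1/2) := by ring
      _ ≤ Qp q K * ∏ k ∈ Finset.range t, (1 - q^(K + k + 1)) :=
          mul_le_mul_of_nonneg_left htail hQK.le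


private noncomputable def gb (q : ℝ) (M j : ℕ) : ℝ :=
  if j ≤ M then Qp q M / (Qp q j * Qp q (M - j)) else 0

private lemma Qp_succ (q : ℝ) (n : ℕ) : Qp q (n+1) = Qp q n * (1 - q^(n+1)) :=
  Finset.prod_range_succ _ _

private lemma Qp_zero (q : ℝ) : Qp q 0 = 1 := Finset.prod_range_zero _

private lemma Qp_ne (q : ℝ) (hq0 : 0 < q) (hq1 : q < 1) (n : ℕ) : Qp q n ≠ 0 :=
  (Qp_pos q hq0 hq1 n).ne'

private lemma one_sub_pow_pos (q : ℝ) (hq0 : 0 < q) (hq1 : q < 1) (n : ℕ) :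
    0 < (1 - q^(n+1)) := by
  have h1 : q ^ (n+1) ≤ q ^ 1 := pow_le_pow_of_le_one hq0.le hq1.le (by omega)
  simp only [pow_one] at h1
  linarith

private lemma one_sub_pow_ne (q : ℝ) (hq0 : 0 < q) (hq1 : q < 1) (n : ℕ) :
    (1 - q^(n+1)) ≠ 0 := (one_sub_pow_pos q hq0 hq1 n).ne'

private lemma gb_zero (q : ℝ) (hq0 : 0 < q) (hq1 : q < 1) (M : ℕ) : gb q M 0 = 1 := by
  rw [gb, if_pos (Nat.zero_le M), Nat.sub_zero, Qp_zero, one_mul,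
    div_self (Qp_ne q hq0 hq1 M)]

private lemma gb_rec (q : ℝ) (hq0 : 0 < q) (hq1 : q < 1) (i j : ℕ) :
    gb q (j+i+1) (j+1) = gb q (j+i) (j+1) + q^i * gb q (j+i) j := by
  have hne : ∀ n, Qp q n ≠ 0 := fun n => (Qp_pos q hq0 hq1 n).ne'
  cases i with
  | zero =>
    have h1 : gb q (j+0) (j+1) = 0 := by rw [gb, if_neg (by omega)]
    have h2 : gb q (j+0+1) (j+1) = 1 := by
      rw [gb, if_pos (by omega)]
      simp only [Nat.add_sub_cancel_left, show j+0+1-(j+1) = 0 from by omega]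
      rw [show Qp q 0 = 1 from Finset.prod_range_zero _, mul_one,
        div_self (Qp_ne q hq0 hq1 (j+1))]
    rw [h1, h2, pow_zero]
    have h3 : gb q (j+0) j = 1 := by
      rw [gb, if_pos (by omega)]
      rw [show j+0-j = 0 from by omega, show Qp q 0 = 1 from Finset.prod_range_zero _, mul_one]
      exact div_self (Qp_ne q hq0 hq1 (j+0))
    rw [h3]; ring
  | succ i' =>
    rw [gb, gb, gb, if_pos (by omega), if_pos (by omega), if_pos (by omega)]
    rw [show j + (i'+1) + 1 - (j+1) = i'+1 from by omega,
        show j + (i'+1) - (j+1) = i' from by omega,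
        show j + (i'+1) - j = i'+1 from by omega,
        show j + (i'+1) + 1 = (j + i' + 1) + 1 from by omega,
        show j + (i'+1) = (j + i') + 1 from by omega]
    rw [Qp_succ q (j+i'+1), Qp_succ q i', Qp_succ q j,
      show j+i'+1+1 = (j+1)+(i'+1) from by omega, pow_add]
    have hP := Qp_pos q hq0 hq1 (j+i'+1)
    have hX := Qp_pos q hq0 hq1 j
    have hY := Qp_pos q hq0 hq1 i'
    have hu := one_sub_pow_pos q hq0 hq1 j
    have hv := one_sub_pow_pos q hq0 hq1 i'
    have hd1 : Qp q j * (1 - q^(j+1)) * Qp q i' ≠ 0 := by positivity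
    have hd2 : Qp q j * (Qp q i' * (1 - q^(i'+1))) ≠ 0 := by positivity
    have hd3 : Qp q j * (1 - q^(j+1)) * (Qp q i' * (1 - q^(i'+1))) ≠ 0 := by positivity
    rw [← mul_div_assoc, div_add_div _ _ hd1 hd2, div_eq_div_iff hd3 (by positivity)]
    ring

private lemma tri_succ (j : ℕ) : (j+1) * ((j+1) - 1) / 2 = j * (j-1)/2 + j := by
  cases j with
  | zero => simp
  | succ k =>
    obtain ⟨m, hm⟩ := Nat.even_mul_succ_self k
    have hm2 : (k+1+1)*((k+1+1)-1) = k*(k+1) + 2*(k+1) := by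
      simp only [Nat.add_sub_cancel]; ring
    have hm3 : (k+1)*((k+1)-1) = k*(k+1) := by
      simp only [Nat.add_sub_cancel]; ring
    omega

private lemma gauss (q : ℝ) (hq0 : 0 < q) (hq1 : q < 1) (M : ℕ) (z : ℂ) :
    ∏ k ∈ Finset.range M, (1 + z * (q:ℂ)^k) =
      ∑ j ∈ Finset.range (M+1), (gb q M j : ℂ) * (q:ℂ)^(j*(j-1)/2) * z^j := by
  induction M with
  | zero => simp [gb, Qp]
  | succ M ih =>
    rw [Finset.prod_range_succ, ih]
    have hzero : (gb q M (M+1) : ℂ) * (q:ℂ)^((M+1)*((M+1)-1)/2) * z^(M+1) = 0 := by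
      rw [gb, if_neg (by omega)]
      push_cast
      ring
    have hexp : (∑ j ∈ Finset.range (M+1), (gb q M j : ℂ) * (q:ℂ)^(j*(j-1)/2) * z^j)
        = ∑ j ∈ Finset.range (M+2), (gb q M j : ℂ) * (q:ℂ)^(j*(j-1)/2) * z^j := by
      rw [Finset.sum_range_succ _ (M+1), hzero, add_zero]
    have h2 : (∑ j ∈ Finset.range (M+1), (gb q M j : ℂ) * (q:ℂ)^(j*(j-1)/2) * z^j)
        = (∑ k ∈ Finset.range (M+1), (gb q M (k+1) : ℂ) * (q:ℂ)^((k+1)*((k+1)-1)/2) * z^(k+1))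
          + (gb q M 0 : ℂ) * (q:ℂ)^(0*(0-1)/2) * z^0 := by
      rw [hexp]; exact Finset.sum_range_succ' _ (M+1)
    rw [mul_add, mul_one]
    conv_rhs => rw [Finset.sum_range_succ' (fun j => (gb q (M+1) j : ℂ) * (q:ℂ)^(j*(j-1)/2) * z^j) (M+1)]
    conv_lhs => rw [Finset.sum_mul]
    rw [h2, add_right_comm, ← Finset.sum_add_distrib]
    congr 1
    · apply Finset.sum_congr rfl
      intro j hj
      have hjM : j ≤ M := by simpa using Nat.lt_succ_iff.mp (Finset.mem_range.mp hj)
      obtain ⟨i, rfl⟩ : ∃ i, M = j + i := ⟨M - j, by omega⟩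
      have hrec := gb_rec q hq0 hq1 i j
      have hrecC : (gb q (j+i+1) (j+1) : ℂ) = (gb q (j+i) (j+1) : ℂ) + (q:ℂ)^i * (gb q (j+i) j : ℂ) := by
        push_cast [hrec]; ring
      rw [hrecC, tri_succ j, pow_add, pow_add, pow_succ]
      push_cast
      ring
    · simp [gb_zero q hq0 hq1]

private lemma sum_range_succ_id (N : ℕ) : ∑ k ∈ Finset.range N, (k+1) = N*(N+1)/2 := by
  induction N with
  | zero => simp
  | succ n ih =>
    rw [Finset.sum_range_succ, ih]
    have h1 : 2 ∣ n*(n+1) := (Nat.even_mul_succ_self n).two_dvd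
    have h2 : (n+1)*(n+1+1) = n*(n+1) + 2*(n+1) := by ring
    omega

private lemma eNegNat (N : ℕ) : (-(N:ℤ))*(-(N:ℤ)-1)/2 = ((N*(N+1)/2 : ℕ) : ℤ) := by
  apply mul_left_cancel₀ (two_ne_zero (α := ℤ))
  rw [eE]
  have h1 : 2 ∣ N*(N+1) := (Nat.even_mul_succ_self N).two_dvd
  have h2 : (2:ℤ) * ((N*(N+1)/2 : ℕ) : ℤ) = ((2 * (N*(N+1)/2) : ℕ) : ℤ) := by push_cast; ring
  rw [h2, Nat.mul_div_cancel' h1]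
  push_cast
  ring

private lemma symm_id (q : ℝ) (hq0 : 0 < q) (hq1 : q < 1) (y : ℂ) (hy : y ≠ 0) (N : ℕ) :
    (∏ k ∈ Finset.range N, (1 + y * (q:ℂ)^k)) * (∏ k ∈ Finset.range N, (1 + (q:ℂ)^(k+1) / y))
      = ∑ j ∈ Finset.range (2*N+1), (gb q (2*N) j : ℂ) *
          (q:ℂ)^((((j:ℤ)-(N:ℤ))*(((j:ℤ)-(N:ℤ))-1)/2)) * y^((j:ℤ)-(N:ℤ)) := by
  have hQ : (q:ℂ) ≠ 0 := Complex.ofReal_ne_zero.mpr hq0.ne'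
  have g := gauss q hq0 hq1 (2*N) (y * (q:ℂ)^(-(N:ℤ)))
  set T : ℕ := N*(N+1)/2 with hT
  -- split the LHS of gauss
  have hsplitL : ∏ k ∈ Finset.range (2*N), (1 + (y * (q:ℂ)^(-(N:ℤ))) * (q:ℂ)^k)
      = (∏ k ∈ Finset.range N, (1 + (y * (q:ℂ)^(-(N:ℤ))) * (q:ℂ)^k)) *
        (∏ k ∈ Finset.range N, (1 + y * (q:ℂ)^k)) := by
    rw [show 2*N = N + N from by ring, Finset.prod_range_add]
    congr 1
    refine Finset.prod_congr rfl fun k _ => ?_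
    congr 1
    rw [← zpow_natCast (q:ℂ) (N+k), mul_assoc, ← zpow_add₀ hQ,
      show (-(N:ℤ) + ((N:ℕ)+(k:ℕ) : ℕ)) = (k:ℤ) from by push_cast; ring, zpow_natCast]
  have hfirst : (∏ k ∈ Finset.range N, (1 + (y * (q:ℂ)^(-(N:ℤ))) * (q:ℂ)^k))
      = ((q:ℂ)^(-(T:ℤ)) * y^N) * ∏ k ∈ Finset.range N, (1 + (q:ℂ)^(k+1) / y) := by
    rw [← Finset.prod_range_reflect]
    have hfac : ∀ k ∈ Finset.range N, (1 + (y * (q:ℂ)^(-(N:ℤ))) * (q:ℂ)^(N-1-k))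
        = (((q:ℂ)^(k+1))⁻¹ * y) * (1 + (q:ℂ)^(k+1) / y) := by
      intro k hk
      have hkN : k < N := Finset.mem_range.mp hk
      have h1 : (y * (q:ℂ)^(-(N:ℤ))) * (q:ℂ)^(N-1-k) = ((q:ℂ)^(k+1))⁻¹ * y := by
        rw [← zpow_natCast (q:ℂ) (N-1-k), mul_assoc, ← zpow_add₀ hQ,
          show (-(N:ℤ) + ((N-1-k : ℕ) : ℤ)) = -((k:ℤ)+1) from by
            push_cast [Nat.cast_sub, Int.ofNat_sub]; omega,
          zpow_neg, show ((k:ℤ)+1) = ((k+1 : ℕ) : ℤ) from by push_cast; ring,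
          zpow_natCast]
        ring
      rw [h1]
      have hqk : ((q:ℂ)^(k+1)) ≠ 0 := pow_ne_zero _ hQ
      field_simp
      ring
    rw [Finset.prod_congr rfl hfac, Finset.prod_mul_distrib, Finset.prod_mul_distrib,
      Finset.prod_const, Finset.card_range]
    congr 2
    rw [Finset.prod_inv_distrib, Finset.prod_pow_eq_pow_sum, sum_range_succ_id, ← hT,
      ← zpow_natCast (q:ℂ) T, ← zpow_neg]
  -- rewrite the RHS of gauss termwise
  have hrhs : ∀ j ∈ Finset.range (2*N+1),
      (gb q (2*N) j : ℂ) * (q:ℂ)^(j*(j-1)/2) * (y * (q:ℂ)^(-(N:ℤ)))^j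
      = ((q:ℂ)^(-(T:ℤ)) * y^N) *
        ((gb q (2*N) j : ℂ) * (q:ℂ)^((((j:ℤ)-(N:ℤ))*(((j:ℤ)-(N:ℤ))-1)/2)) * y^((j:ℤ)-(N:ℤ))) := by
    intro j _
    have hyj : (y:ℂ)^((j:ℤ)-(N:ℤ)) = y^(j:ℕ) * (y^(N:ℕ))⁻¹ := by
      rw [show (j:ℤ)-(N:ℤ) = (j:ℤ) + (-(N:ℤ)) from by ring, zpow_add₀ hy, zpow_natCast,
        zpow_neg, zpow_natCast]
    have hexp : (((j:ℤ)-(N:ℤ))*(((j:ℤ)-(N:ℤ))-1)/2)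
        = ((j*(j-1)/2 : ℕ) : ℤ) + (T:ℤ) + (j:ℤ)*(-(N:ℤ)) := by
      rw [show (j:ℤ)-(N:ℤ) = (j:ℤ) + (-(N:ℤ)) from by ring, eAdd, eCast, eNegNat, ← hT]
    have hq1' : (q:ℂ)^((((j:ℤ)-(N:ℤ))*(((j:ℤ)-(N:ℤ))-1)/2))
        = (q:ℂ)^(j*(j-1)/2) * (q:ℂ)^(T:ℤ) * (q:ℂ)^((j:ℤ)*(-(N:ℤ))) := by
      rw [hexp, zpow_add₀ hQ, zpow_add₀ hQ, zpow_natCast]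
    have hmp : (y * (q:ℂ)^(-(N:ℤ)))^j = y^j * (q:ℂ)^((j:ℤ)*(-(N:ℤ))) := by
      rw [mul_pow, ← zpow_natCast ((q:ℂ)^(-(N:ℤ))) j, ← zpow_mul]
      ring_nf
    rw [hq1', hmp, hyj]
    have hyN : (y:ℂ)^(N:ℕ) ≠ 0 := pow_ne_zero _ hy
    have hqT : (q:ℂ)^(T:ℤ) ≠ 0 := zpow_ne_zero _ hQ
    rw [zpow_neg]
    field_simp
  rw [hsplitL, hfirst] at g
  rw [Finset.sum_congr rfl hrhs, ← Finset.mul_sum] at g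
  have hne : ((q:ℂ)^(-(T:ℤ)) * y^N) ≠ 0 :=
    mul_ne_zero (zpow_ne_zero _ hQ) (pow_ne_zero _ hy)
  refine mul_left_cancel₀ hne ?_
  linear_combination g

noncomputable def jTheta' (q : ℝ) (x : ℂ) : ℂ := ∑' n : ℤ, (q : ℂ) ^ (n * (n - 1) / 2) * x ^ n

private lemma norm_theta_term (q : ℝ) (hq0 : 0 < q) (y : ℂ) (m : ℤ) :
    ‖(q:ℂ) ^ (m * (m - 1) / 2) * y ^ m‖ = q ^ (m * (m - 1) / 2) * ‖y‖ ^ m := by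
  rw [norm_mul, norm_zpow, norm_zpow, Complex.norm_real, Real.norm_eq_abs,
    _root_.abs_of_pos hq0]

private lemma summable_thetaC (q : ℝ) (hq0 : 0 < q) (hq1 : q < 1) (y : ℂ) (hy : y ≠ 0) :
    Summable (fun m : ℤ => (q:ℂ) ^ (m * (m - 1) / 2) * y ^ m) := by
  rw [← summable_norm_iff]
  have : (fun m : ℤ => ‖(q:ℂ) ^ (m * (m - 1) / 2) * y ^ m‖)
      = fun m : ℤ => q ^ (m * (m - 1) / 2) * ‖y‖ ^ m := by
    funext m; exact norm_theta_term q hq0 y m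
  rw [this]
  exact summable_thetaR q ‖y‖ hq0 hq1 (norm_pos_iff.mpr hy)

/-- Main nonvanishing result for the Jacobi theta function. -/
private lemma theta_ne_zero (q : ℝ) (hq0 : 0 < q) (hq1 : q < 1) (y : ℂ) (hy : y ≠ 0)
    (hcond : ∀ k : ℤ, y * (q:ℂ)^k ≠ -1) : jTheta' q y ≠ 0 := by
  have hQ : (q:ℂ) ≠ 0 := Complex.ofReal_ne_zero.mpr hq0.ne'
  obtain ⟨c, hc0, hc⟩ := Qp_lb q hq0 hq1
  -- the limit L of Qp
  set L : ℝ := ⨅ n, Qp q n with hLdef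
  have hQpanti : Antitone (Qp q) := Qp_antitone q hq0 hq1
  have hQpbdd : BddBelow (Set.range (Qp q)) := ⟨c, by rintro r ⟨n, rfl⟩; exact hc n⟩
  have hL : Filter.Tendsto (Qp q) Filter.atTop (𝓝 L) := tendsto_atTop_ciInf hQpanti hQpbdd
  have hcL : c ≤ L := le_ciInf (fun n => hc n)
  have hL0 : 0 < L := lt_of_lt_of_le hc0 hcL
  -- the partial products
  set P : ℕ → ℂ := fun N => (∏ k ∈ Finset.range N, (1 + y * (q:ℂ)^k)) *
      (∏ k ∈ Finset.range N, (1 + (q:ℂ)^(k+1) / y)) with hPdef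
  -- ℤ-indexed finite families
  set G : ℕ → ℤ → ℂ := fun N m => if m.natAbs ≤ N then
      (gb q (2*N) ((m+N).toNat) : ℂ) * (q:ℂ)^(m*(m-1)/2) * y^m else 0 with hGdef
  -- P N equals the tsum of G N
  have hPG : ∀ N, P N = ∑' m : ℤ, G N m := by
    intro N
    have h1 : ∑' m : ℤ, G N m = ∑ m ∈ Finset.Icc (-(N:ℤ)) N, G N m := by
      apply tsum_eq_sum
      intro m hm
      rw [hGdef]
      simp only []
      rw [if_neg]
      intro hcon
      exact hm (Finset.mem_Icc.mpr (by omega))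
    rw [h1, hPdef]
    simp only []
    rw [symm_id q hq0 hq1 y hy N]
    apply Finset.sum_nbij' (fun j : ℕ => (j:ℤ) - N) (fun m : ℤ => (m + N).toNat)
    · intro j hj
      simp only [Finset.mem_range] at hj
      exact Finset.mem_Icc.mpr (by omega)
    · intro m hm
      simp only [Finset.mem_Icc] at hm
      exact Finset.mem_range.mpr (by omega)
    · intro j hj; simp only [Finset.mem_range] at hj; omega
    · intro m hm; simp only [Finset.mem_Icc] at hm; omega
    · intro j hj
      simp only [Finset.mem_range] at hj
      rw [hGdef]
      simp only []
      rw [if_pos (by omega), show ((j:ℤ) - N + N).toNat = j from by omega]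
  -- dominating bound
  have hgb_bound : ∀ (M j : ℕ), |gb q M j| ≤ 1/(c*c) := by
    intro M j
    rw [gb]
    split_ifs with h
    · have hj := Qp_pos q hq0 hq1 j
      have hMj := Qp_pos q hq0 hq1 (M-j)
      have hM := Qp_pos q hq0 hq1 M
      have h1 : Qp q M ≤ 1 := Qp_le_one q hq0 hq1 M
      have h2 : c*c ≤ Qp q j * Qp q (M-j) :=
        mul_le_mul (hc j) (hc (M-j)) hc0.le hj.le
      rw [_root_.abs_of_nonneg (by positivity)]
      rw [div_le_div_iff₀ (by positivity) (by positivity)]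
      nlinarith
    · rw [_root_.abs_zero]; positivity
  have hbound : ∀ N, ∀ m : ℤ, ‖G N m‖ ≤ (1/(c*c)) * (q ^ (m*(m-1)/2) * ‖y‖^m) := by
    intro N m
    rw [hGdef]
    simp only []
    split_ifs with h
    · rw [norm_mul, norm_mul, Complex.norm_real, Real.norm_eq_abs, norm_zpow, norm_zpow,
        Complex.norm_real, Real.norm_eq_abs, _root_.abs_of_pos hq0, mul_assoc]
      apply mul_le_mul_of_nonneg_right (hgb_bound _ _)
      positivity
    · rw [norm_zero]
      positivity
  have hbsum : Summable (fun m : ℤ => (1/(c*c)) * (q ^ (m*(m-1)/2) * ‖y‖^m)) :=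
    (summable_thetaR q ‖y‖ hq0 hq1 (norm_pos_iff.mpr hy)).mul_left _
  -- pointwise limits
  have h2atTop : Filter.Tendsto (fun N : ℕ => 2*N) Filter.atTop Filter.atTop :=
    Filter.tendsto_atTop_atTop_of_monotone (fun a b h => by omega) (fun b => ⟨b, by omega⟩)
  have hpt : ∀ m : ℤ, Filter.Tendsto (fun N => G N m) Filter.atTop
      (𝓝 (((1/L : ℝ) : ℂ) * ((q:ℂ)^(m*(m-1)/2) * y^m))) := by
    intro m
    have htoNat1 : Filter.Tendsto (fun N : ℕ => (m + N).toNat) Filter.atTop Filter.atTop :=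
      Filter.tendsto_atTop_atTop_of_monotone (fun a b h => by omega)
        (fun b => ⟨b + m.natAbs, by omega⟩)
    have htoNat2 : Filter.Tendsto (fun N : ℕ => ((N:ℤ) - m).toNat) Filter.atTop Filter.atTop :=
      Filter.tendsto_atTop_atTop_of_monotone (fun a b h => by omega)
        (fun b => ⟨b + m.natAbs, by omega⟩)
    have hgbtend : Filter.Tendsto (fun N : ℕ => gb q (2*N) ((m+N).toNat)) Filter.atTop
        (𝓝 (1/L)) := by
      have hnum : Filter.Tendsto (fun N : ℕ => Qp q (2*N)) Filter.atTop (𝓝 L) :=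
        hL.comp h2atTop
      have hd1 : Filter.Tendsto (fun N : ℕ => Qp q ((m+N).toNat)) Filter.atTop (𝓝 L) :=
        hL.comp htoNat1
      have hd2 : Filter.Tendsto (fun N : ℕ => Qp q (((N:ℤ) - m).toNat)) Filter.atTop (𝓝 L) :=
        hL.comp htoNat2
      have hdiv : Filter.Tendsto
          (fun N : ℕ => Qp q (2*N) / (Qp q ((m+N).toNat) * Qp q (((N:ℤ) - m).toNat)))
          Filter.atTop (𝓝 (L / (L * L))) :=
        hnum.div (hd1.mul hd2) (by positivity)
      have heq : L / (L*L) = 1/L := by field_simp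
      rw [heq] at hdiv
      apply hdiv.congr'
      filter_upwards [Filter.eventually_ge_atTop m.natAbs] with N hN
      rw [gb, if_pos (by omega), show 2*N - (m+N).toNat = ((N:ℤ) - m).toNat from by omega]
    have hGev : (fun N : ℕ => ((gb q (2*N) ((m+N).toNat) : ℝ) : ℂ) * ((q:ℂ)^(m*(m-1)/2) * y^m))
        =ᶠ[Filter.atTop] (fun N => G N m) := by
      filter_upwards [Filter.eventually_ge_atTop m.natAbs] with N hN
      rw [hGdef]
      simp only []
      rw [if_pos hN]
      ring
    apply Filter.Tendsto.congr' hGev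
    exact ((Complex.continuous_ofReal.tendsto _).comp hgbtend).mul_const _
  -- Tannery
  have hTan : Filter.Tendsto (fun N => ∑' m : ℤ, G N m) Filter.atTop
      (𝓝 (∑' m : ℤ, ((1/L : ℝ) : ℂ) * ((q:ℂ)^(m*(m-1)/2) * y^m))) :=
    tendsto_tsum_of_dominated_convergence hbsum hpt
      (Filter.Eventually.of_forall hbound)
  have hSval : (∑' m : ℤ, ((1/L : ℝ) : ℂ) * ((q:ℂ)^(m*(m-1)/2) * y^m))
      = ((1/L : ℝ) : ℂ) * jTheta' q y := by
    rw [jTheta', tsum_mul_left]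
  rw [hSval] at hTan
  have hPlim : Filter.Tendsto P Filter.atTop (𝓝 (((1/L : ℝ) : ℂ) * jTheta' q y)) := by
    apply hTan.congr'
    filter_upwards with N
    rw [hPG N]
  -- choice of K for the tail bound
  obtain ⟨K, hK1, hK2⟩ : ∃ K : ℕ, ‖y‖ * q^K * (1/(1-q)) ≤ 1/4 ∧
      (q^(K+1)/‖y‖) * (1/(1-q)) ≤ 1/4 := by
    have hq' : Filter.Tendsto (fun K : ℕ => q ^ K) Filter.atTop (𝓝 0) :=
      tendsto_pow_atTop_nhds_zero_of_lt_one hq0.le hq1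
    have h1 : Filter.Tendsto (fun K : ℕ => ‖y‖ * q^K * (1/(1-q))) Filter.atTop (𝓝 0) := by
      have := (hq'.const_mul ‖y‖).mul_const (1/(1-q))
      simpa using this
    have h2 : Filter.Tendsto (fun K : ℕ => (q^(K+1)/‖y‖) * (1/(1-q))) Filter.atTop (𝓝 0) := by
      have := ((hq'.comp (Filter.tendsto_add_atTop_nat 1)).div_const ‖y‖).mul_const (1/(1-q))
      simpa [Function.comp] using this
    have e1 := h1.eventually (eventually_le_nhds (by norm_num : (0:ℝ) < 1/4))
    have e2 := h2.eventually (eventually_le_nhds (by norm_num : (0:ℝ) < 1/4))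
    exact (e1.and e2).exists
  have hyn : 0 < ‖y‖ := norm_pos_iff.mpr hy
  have hq1' : 0 < 1 - q := by linarith
  -- each factor of P K is nonzero
  have hPKne : P K ≠ 0 := by
    rw [hPdef]
    simp only []
    apply mul_ne_zero
    · rw [Finset.prod_ne_zero_iff]
      intro k _
      intro hzero
      apply hcond (k : ℤ)
      rw [← zpow_natCast (q:ℂ) k] at hzero
      linear_combination hzero
    · rw [Finset.prod_ne_zero_iff]
      intro k _
      intro hzero
      apply hcond (-(k+1) : ℤ)
      have hyq : y = -(q:ℂ)^(k+1) := by
        field_simp at hzero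
        linear_combination hzero
      rw [hyq, neg_mul, ← zpow_natCast (q:ℂ) (k+1), ← zpow_add₀ hQ,
        show ((k+1:ℕ):ℤ) + (-((k:ℤ)+1)) = 0 from by push_cast; ring, zpow_zero]
  -- eventual lower bound for ‖P N‖
  have hev : ∀ᶠ N in Filter.atTop, ‖P K‖/2 ≤ ‖P N‖ := by
    filter_upwards [Filter.eventually_ge_atTop K] with N hN
    obtain ⟨t, rfl⟩ : ∃ t, N = K + t := ⟨N - K, by omega⟩
    have hsplit : P (K+t) = P K *
        ((∏ k ∈ Finset.range t, (1 + y * (q:ℂ)^(K+k))) *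
         (∏ k ∈ Finset.range t, (1 + (q:ℂ)^(K+k+1) / y))) := by
      rw [hPdef]
      simp only []
      rw [Finset.prod_range_add, Finset.prod_range_add]
      ring
    have htail1 : (3:ℝ)/4 ≤ ‖∏ k ∈ Finset.range t, (1 + y * (q:ℂ)^(K+k))‖ := by
      have hsum : ∑ k ∈ Finset.range t, ‖y * (q:ℂ)^(K+k)‖ ≤ 1/4 := by
        have heq : ∀ k, ‖y * (q:ℂ)^(K+k)‖ = ‖y‖ * q^K * q^k := by
          intro k
          rw [norm_mul, norm_pow, Complex.norm_real, Real.norm_eq_abs, _root_.abs_of_pos hq0,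
            pow_add, mul_assoc]
        calc ∑ k ∈ Finset.range t, ‖y * (q:ℂ)^(K+k)‖
            = (‖y‖ * q^K) * ∑ k ∈ Finset.range t, q^k := by
              rw [Finset.mul_sum]; exact Finset.sum_congr rfl fun k _ => by rw [heq, mul_assoc]
          _ ≤ (‖y‖ * q^K) * (1/(1-q)) :=
              mul_le_mul_of_nonneg_left (geom_bound q hq0.le hq1 t) (by positivity)
          _ ≤ 1/4 := hK1
      have hone : ∀ k ∈ Finset.range t, ‖y * (q:ℂ)^(K+k)‖ ≤ 1 := by
        intro k hk
        have h := Finset.single_le_sum (f := fun k => ‖y * (q:ℂ)^(K+k)‖)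
          (fun i _ => norm_nonneg _) hk
        linarith
      have := norm_prod_one_add_ge (Finset.range t) (fun k => y * (q:ℂ)^(K+k)) hone
      linarith
    have htail2 : (3:ℝ)/4 ≤ ‖∏ k ∈ Finset.range t, (1 + (q:ℂ)^(K+k+1) / y)‖ := by
      have hsum : ∑ k ∈ Finset.range t, ‖(q:ℂ)^(K+k+1) / y‖ ≤ 1/4 := by
        have heq : ∀ k, ‖(q:ℂ)^(K+k+1) / y‖ = (q^(K+1)/‖y‖) * q^k := by
          intro k
          rw [norm_div, norm_pow, Complex.norm_real, Real.norm_eq_abs, _root_.abs_of_pos hq0,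
            show K+k+1 = (K+1)+k from by omega, pow_add]
          ring
        calc ∑ k ∈ Finset.range t, ‖(q:ℂ)^(K+k+1) / y‖
            = (q^(K+1)/‖y‖) * ∑ k ∈ Finset.range t, q^k := by
              rw [Finset.mul_sum]; exact Finset.sum_congr rfl fun k _ => heq k
          _ ≤ (q^(K+1)/‖y‖) * (1/(1-q)) :=
              mul_le_mul_of_nonneg_left (geom_bound q hq0.le hq1 t) (by positivity)
          _ ≤ 1/4 := hK2
      have hone : ∀ k ∈ Finset.range t, ‖(q:ℂ)^(K+k+1) / y‖ ≤ 1 := by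
        intro k hk
        have h := Finset.single_le_sum (f := fun k => ‖(q:ℂ)^(K+k+1) / y‖)
          (fun i _ => norm_nonneg _) hk
        linarith
      have := norm_prod_one_add_ge (Finset.range t) (fun k => (q:ℂ)^(K+k+1) / y) hone
      linarith
    rw [hsplit]
    simp only [norm_mul]
    have hPK : 0 < ‖P K‖ := norm_pos_iff.mpr hPKne
    calc ‖P K‖/2 ≤ ‖P K‖ * (9/16) := by nlinarith
      _ ≤ ‖P K‖ * (‖∏ k ∈ Finset.range t, (1 + y * (q:ℂ)^(K+k))‖ *
            ‖∏ k ∈ Finset.range t, (1 + (q:ℂ)^(K+k+1) / y)‖) := by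
          apply mul_le_mul_of_nonneg_left _ hPK.le
          nlinarith
  -- conclude
  have hfinal : ‖P K‖/2 ≤ ‖((1/L : ℝ) : ℂ) * jTheta' q y‖ :=
    ge_of_tendsto hPlim.norm hev
  intro hzero
  rw [hzero, mul_zero, norm_zero] at hfinal
  have hPK : 0 < ‖P K‖ := norm_pos_iff.mpr hPKne
  linarith

private lemma theta_shift (q : ℝ) (hq0 : 0 < q) (hq1 : q < 1) (y : ℂ) (hy : y ≠ 0) (m : ℤ) :
    (q:ℂ)^(m*(m-1)/2) * y^m * jTheta' q ((q:ℂ)^m * y) = jTheta' q y := by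
  have hQ : (q:ℂ) ≠ 0 := Complex.ofReal_ne_zero.mpr hq0.ne'
  rw [jTheta', jTheta',
    ← (Equiv.addRight m).tsum_eq (fun k => (q:ℂ)^(k*(k-1)/2) * y^k), ← tsum_mul_left]
  apply tsum_congr
  intro n
  simp only [Equiv.coe_addRight]
  rw [mul_zpow, ← zpow_mul, eAdd n m, zpow_add₀ hQ, zpow_add₀ hQ, zpow_add₀ hy]
  ring

private lemma coeff_summable (a : ℕ → ℂ) (f : ℂ → ℂ)
    (hf : ∀ z : ℂ, HasSum (fun n : ℕ => a n * z ^ n) (f z)) (r : ℝ) (hr : 0 ≤ r) :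
    Summable (fun m : ℕ => ‖a m‖ * r ^ m) := by
  have h1 : Summable (fun m : ℕ => a m * ((2*r+2 : ℝ):ℂ)^m) := (hf _).summable
  have h2 : Filter.Tendsto (fun m => ‖a m * ((2*r+2:ℝ):ℂ)^m‖) Filter.atTop (𝓝 0) := by
    simpa using h1.tendsto_atTop_zero.norm
  obtain ⟨C, hC⟩ := h2.bddAbove_range
  have hCb : ∀ m : ℕ, ‖a m‖ * (2*r+2)^m ≤ C := by
    intro m
    have h3 : ‖a m * ((2*r+2:ℝ):ℂ)^m‖ ≤ C := hC ⟨m, rfl⟩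
    rwa [norm_mul, norm_pow, Complex.norm_real, Real.norm_eq_abs,
      _root_.abs_of_pos (by linarith)] at h3
  apply Summable.of_nonneg_of_le (f := fun m => C * (1/2)^m) (fun m => by positivity) _
    ((summable_geometric_of_lt_one (by norm_num) (by norm_num)).mul_left C)
  intro m
  show ‖a m‖ * r ^ m ≤ C * (1/2)^m
  have hle : r^m * 2^m ≤ (2*r+2)^m := by
    rw [← mul_pow]
    exact pow_le_pow_left₀ (by positivity) (by linarith) m
  have h4 : ‖a m‖ * r^m * 2^m ≤ ‖a m‖ * (2*r+2)^m := by
    rw [mul_assoc]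
    exact mul_le_mul_of_nonneg_left hle (norm_nonneg _)
  have h5 : ‖a m‖ * r^m * 2^m ≤ C := le_trans h4 (hCb m)
  have h6 : (0:ℝ) < 2^m := by positivity
  rw [show C * (1/2)^m = C / 2^m from by rw [div_pow]; ring, le_div_iff₀ h6]
  exact h5


private lemma jTheta_eq (q : ℝ) (x : ℂ) : jTheta q x = jTheta' q x := rfl

/-- for an entire function `f(x) = Σ aₙ xⁿ` with q-Borel transform
`ψ(ξ) = Σ aₙ q^{n(n-1)/2} ξⁿ`, the q-Laplace transform of `ψ` recovers `f`:
the bilateral series `Σ_{n∈ℤ} ψ(λqⁿ)/θ_q(λqⁿ/x)` converges absolutely to `f(x)`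
whenever `x ∉ [-λ;q]`. -/
theorem qLaplace_qBorel_eq_self (q : ℝ) (hq0 : 0 < q) (hq1 : q < 1)
    (f : ℂ → ℂ) (a : ℕ → ℂ) (hf : ∀ z : ℂ, HasSum (fun n : ℕ => a n * z ^ n) (f z))
    (lam : ℂ) (hlam : lam ≠ 0) (x : ℂ) (hx0 : x ≠ 0)
    (hx : ∀ k : ℤ, x ≠ -lam * (q : ℂ) ^ k) :
    let ψ : ℂ → ℂ := fun ξ => ∑' n : ℕ, a n * (q : ℂ) ^ (n * (n - 1) / 2) * ξ ^ n
    Summable (fun n : ℤ => ‖ψ (lam * (q : ℂ) ^ n) / jTheta q (lam * (q : ℂ) ^ n / x)‖) ∧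
      ∑' n : ℤ, ψ (lam * (q : ℂ) ^ n) / jTheta q (lam * (q : ℂ) ^ n / x) = f x := by
  intro ψ
  have hQ : (q:ℂ) ≠ 0 := Complex.ofReal_ne_zero.mpr hq0.ne'
  set y : ℂ := lam / x with hydef
  have hy : y ≠ 0 := div_ne_zero hlam hx0
  have hynorm : 0 < ‖y‖ := norm_pos_iff.mpr hy
  have hxy : x * y = lam := by rw [hydef]; field_simp
  have hθy : jTheta' q y ≠ 0 := by
    apply theta_ne_zero q hq0 hq1 y hy
    intro k hk
    apply hx k
    calc x = -(y * (q:ℂ)^k) * x := by rw [hk]; ring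
      _ = -lam * (q:ℂ)^k := by rw [← hxy]; ring
  have hcne : ∀ n : ℤ, (q:ℂ)^(n*(n-1)/2) * y^n ≠ 0 :=
    fun n => mul_ne_zero (zpow_ne_zero _ hQ) (zpow_ne_zero _ hy)
  have hθn : ∀ n : ℤ, jTheta q (lam * (q:ℂ)^n / x)
      = jTheta' q y / ((q:ℂ)^(n*(n-1)/2) * y^n) := by
    intro n
    rw [show lam * (q:ℂ)^n / x = (q:ℂ)^n * y from by rw [hydef]; ring]
    rw [jTheta_eq, eq_div_iff (hcne n)]
    linear_combination theta_shift q hq0 hq1 y hy n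
  set F : ℤ × ℕ → ℂ := fun p => a p.2 * lam ^ p.2 * y ^ p.1 *
      (q:ℂ) ^ ((p.1 + (p.2:ℤ)) * (p.1 + (p.2:ℤ) - 1) / 2) with hFdef
  set σ : ℤ × ℕ ≃ ℤ × ℕ :=
    { toFun := fun p => (p.1 - p.2, p.2), invFun := fun p => (p.1 + p.2, p.2),
      left_inv := fun p => by simp, right_inv := fun p => by simp } with hσdef
  have hxm : ∀ m : ℕ, lam ^ m * (y ^ m)⁻¹ = x ^ m := by
    intro m
    rw [← hxy, mul_pow]
    have : y ^ m ≠ 0 := pow_ne_zero _ hy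
    field_simp
  have hFσ : ∀ p : ℤ × ℕ, F (σ p) = (a p.2 * x ^ p.2) *
      ((q:ℂ)^(p.1*(p.1-1)/2) * y^p.1) := by
    intro p
    rw [hσdef, hFdef]
    simp only [Equiv.coe_fn_mk]
    rw [show (p.1 - (p.2:ℤ) + (p.2:ℤ)) = p.1 from by ring,
      zpow_sub₀ hy, zpow_natCast, div_eq_mul_inv]
    rw [← hxm p.2]
    ring
  have hFσsum : Summable (F ∘ σ) := by
    rw [← summable_norm_iff]
    have heq : (fun p : ℤ×ℕ => ‖(F ∘ σ) p‖)
        = fun p : ℤ×ℕ => (q^(p.1*(p.1-1)/2) * ‖y‖^p.1) * (‖a p.2‖ * ‖x‖^p.2) := by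
      funext p
      rw [Function.comp_apply, hFσ p, norm_mul, norm_mul, norm_mul, norm_pow, norm_zpow,
        norm_zpow, Complex.norm_real, Real.norm_eq_abs, _root_.abs_of_pos hq0]
      ring
    rw [heq]
    exact (summable_thetaR q ‖y‖ hq0 hq1 hynorm).mul_of_nonneg
      (coeff_summable a f hf ‖x‖ (norm_nonneg x))
      (fun p => by positivity) (fun p => by positivity)
  have hFsum : Summable F := σ.summable_iff.mp hFσsum
  have hψval : ∀ ξ : ℂ, ψ ξ = ∑' m : ℕ, a m * (q:ℂ)^(m*(m-1)/2) * ξ^m := fun ξ => rfl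
  have hψn : ∀ n : ℤ, ψ (lam * (q:ℂ)^n) * ((q:ℂ)^(n*(n-1)/2) * y^n)
      = ∑' m : ℕ, F (n, m) := by
    intro n
    rw [hψval, ← tsum_mul_right]
    apply tsum_congr
    intro m
    rw [hFdef]
    simp only []
    rw [mul_pow, ← zpow_natCast ((q:ℂ)^(n:ℤ)) m, ← zpow_mul,
      show ((q:ℂ)^(m*(m-1)/2 : ℕ)) = (q:ℂ)^(((m:ℤ)) * ((m:ℤ)-1)/2) from by
        rw [← zpow_natCast (q:ℂ) (m*(m-1)/2), eCast],
      eAdd n m, zpow_add₀ hQ, zpow_add₀ hQ]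
    ring
  have hterm : ∀ n : ℤ, ψ (lam * (q:ℂ)^n) / jTheta q (lam * (q:ℂ)^n / x)
      = (∑' m : ℕ, F (n, m)) / jTheta' q y := by
    intro n
    rw [hθn n, div_div_eq_mul_div, hψn n]
  have hFval : (∑' p : ℤ×ℕ, F p) = jTheta' q y * f x := by
    have hsum2 : Summable (fun p : ℤ×ℕ => (a p.2 * x ^ p.2) *
        ((q:ℂ)^(p.1*(p.1-1)/2) * y^p.1)) :=
      hFσsum.congr (fun p => by rw [Function.comp_apply, hFσ p])
    calc ∑' p : ℤ×ℕ, F p = ∑' p : ℤ×ℕ, F (σ p) := (σ.tsum_eq F).symm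
      _ = ∑' p : ℤ×ℕ, (a p.2 * x ^ p.2) * ((q:ℂ)^(p.1*(p.1-1)/2) * y^p.1) :=
          tsum_congr hFσ
      _ = ∑' (j : ℤ), ∑' (m : ℕ), (a m * x ^ m) * ((q:ℂ)^(j*(j-1)/2) * y^j) :=
          Summable.tsum_prod hsum2
      _ = ∑' (j : ℤ), ((q:ℂ)^(j*(j-1)/2) * y^j) * f x := by
          apply tsum_congr
          intro j
          rw [tsum_mul_right, (hf x).tsum_eq, mul_comm]
      _ = (∑' (j : ℤ), (q:ℂ)^(j*(j-1)/2) * y^j) * f x := tsum_mul_right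
      _ = jTheta' q y * f x := by rw [jTheta']
  constructor
  · have hnorms : Summable (fun p : ℤ×ℕ => ‖F p‖) := hFsum.norm
    have hg : Summable (fun n : ℤ => ∑' m : ℕ, ‖F (n, m)‖) := hnorms.prod
    apply Summable.of_nonneg_of_le
      (f := fun n : ℤ => (∑' m : ℕ, ‖F (n, m)‖) / ‖jTheta' q y‖)
      (fun n => norm_nonneg _) _ (hg.div_const _)
    intro n
    show ‖ψ (lam * (q:ℂ)^n) / jTheta q (lam * (q:ℂ)^n / x)‖
      ≤ (∑' m : ℕ, ‖F (n, m)‖) / ‖jTheta' q y‖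
    rw [hterm n, norm_div]
    gcongr
    exact norm_tsum_le_tsum_norm (hnorms.prod_factor n)
  · calc ∑' n : ℤ, ψ (lam * (q:ℂ)^n) / jTheta q (lam * (q:ℂ)^n / x)
        = ∑' n : ℤ, (∑' m : ℕ, F (n, m)) / jTheta' q y := tsum_congr hterm
      _ = (∑' n : ℤ, ∑' m : ℕ, F (n, m)) / jTheta' q y := tsum_div_const
      _ = (∑' p : ℤ×ℕ, F p) / jTheta' q y := by rw [Summable.tsum_prod hFsum]
      _ = (jTheta' q y * f x) / jTheta' q y := by rw [hFval]
      _ = f x := by field_simp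
end

section
/- Let α, β ∈ ℂ and let x ∈ ℂ with x ∉ (−∞, 0] (i.e. −π < arg x < π). Then lim_{q→1⁻} θ_q(q^β x)/θ_q(q^α x) = x^{α−β}, where q^α = exp(α log q), q^β = exp(β log q), and x^{α−β} = exp((α−β) Log x) with the principal logarithm. -/
open Complex Filter Topology

/-- The complex power `q^α := exp(α log q)` for a real base `q`. -/
noncomputable def qcpow (q : ℝ) (α : ℂ) : ℂ := Complex.exp (α * (Real.log q : ℂ))

lemma term_eq (q : ℝ) (hq : q ∈ Set.Ioo (0:ℝ) 1) (γ x : ℂ) (hx : x ≠ 0) (n : ℤ) :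
    (q : ℂ) ^ (n * (n - 1) / 2) * (Complex.exp (γ * (Real.log q : ℂ)) * x) ^ n =
      jacobiTheta₂_term n (((γ - 1/2) * (Real.log q : ℂ) + Complex.log x) / (2*Real.pi*I))
        ((Real.log q : ℂ) / (2*Real.pi*I)) := by
  set L : ℂ := (Real.log q : ℂ)
  have hq' : (q:ℂ) = Complex.exp L := by
    rw [← Complex.ofReal_exp, Real.exp_log hq.1]
  obtain ⟨k, hk⟩ : (2:ℤ) ∣ n * (n-1) := by
    rcases Int.even_or_odd n with h | h
    · exact Dvd.dvd.mul_right h.two_dvd _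
    · obtain ⟨m, hm⟩ := h
      exact Dvd.dvd.mul_left ⟨m, by omega⟩ _
  have hdiv : n * (n-1) / 2 = k := by rw [hk, Int.mul_ediv_cancel_left _ two_ne_zero]
  have h1 : (Complex.exp (γ * L) * x) ^ n = Complex.exp ((n : ℂ) * (γ * L + Complex.log x)) := by
    have hxx : Complex.exp (γ * L) * x = Complex.exp (γ * L + Complex.log x) := by
      rw [Complex.exp_add, Complex.exp_log hx]
    rw [hxx, ← Complex.exp_int_mul]
  have h2 : (q:ℂ) ^ (n * (n-1) / 2) = Complex.exp ((k : ℂ) * L) := by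
    rw [hdiv, hq', ← Complex.exp_int_mul]
  rw [h1, h2, ← Complex.exp_add, jacobiTheta₂_term]
  congr 1
  have hk' : ((n:ℂ) * (n - 1)) = 2 * k := by exact_mod_cast congrArg (Int.cast : ℤ → ℂ) hk
  have h2pi : (2:ℂ) * Real.pi * I ≠ 0 := by
    simp [Real.pi_ne_zero, I_ne_zero]
  have e1 : 2 * (Real.pi:ℂ) * I * n * (((γ - 1/2) * L + Complex.log x) / (2*Real.pi*I))
      = n * ((γ - 1/2) * L + Complex.log x) := by
    field_simp
  have e2 : (Real.pi:ℂ) * I * n^2 * (L / (2*Real.pi*I)) = n^2 * (L/2) := by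
    field_simp
  rw [e1, e2]
  linear_combination (-L/2) * hk'

open Real in
lemma summable_exp_neg_abs_int : Summable (fun n : ℤ => rexp (-|(n:ℝ)|)) := by
  have h : Summable (fun n : ℕ => rexp (-(n:ℝ))) := by
    have : ∀ n : ℕ, rexp (-(n:ℝ)) = (rexp (-1)) ^ n := by
      intro n; rw [← Real.exp_nat_mul]; ring_nf
    simp_rw [this]
    exact summable_geometric_of_lt_one (le_of_lt (Real.exp_pos _)) (by
      rw [Real.exp_lt_one_iff]; norm_num)
  apply Summable.of_nat_of_neg <;> simpa using h

open Real in
theorem theta_lim (γ x : ℂ) (hx : x ∈ Complex.slitPlane) :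
    Filter.Tendsto (fun L : ℝ => jacobiTheta₂ (((γ - 1/2) * (L:ℂ) + Complex.log x) / (L:ℂ))
      (-2*(Real.pi:ℂ)*I/(L:ℂ))) (nhdsWithin (0:ℝ) (Set.Iio 0)) (nhds 1) := by
  have hx0 : x ≠ 0 := Complex.slitPlane_ne_zero hx
  set a : ℝ := (Complex.log x).im with ha
  have haπ : |a| < Real.pi := by
    rw [ha, Complex.log_im, abs_lt]
    exact ⟨Complex.neg_pi_lt_arg x,
      lt_of_le_of_ne (Complex.arg_le_pi x) (Complex.slitPlane_arg_ne_pi hx)⟩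
  set A : ℝ := |γ.im| with hA
  set δ : ℝ := Real.pi - |a| with hδ
  have hδ0 : 0 < δ := by simpa [hδ] using haπ
  set K : ℝ := ∑' n : ℤ, rexp (-|(n:ℝ)|) with hK
  -- the c L quantity
  set c : ℝ → ℝ := fun L => 2*Real.pi*δ/(-L) - 2*Real.pi*A with hc
  -- bound on the norm of theta - 1
  have key : ∀ L : ℝ, L < 0 → 1 ≤ c L →
      ‖jacobiTheta₂ (((γ - 1/2) * (L:ℂ) + Complex.log x) / (L:ℂ))
        (-2*(Real.pi:ℂ)*I/(L:ℂ)) - 1‖ ≤ rexp (1 - c L) * K := by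
    intro L hL hcL
    set w : ℂ := ((γ - 1/2) * (L:ℂ) + Complex.log x) / (L:ℂ) with hw
    set t : ℂ := -2*(Real.pi:ℂ)*I/(L:ℂ) with ht
    have hL0 : (L:ℂ) ≠ 0 := by exact_mod_cast ne_of_lt hL
    have hLne : L ≠ 0 := ne_of_lt hL
    have himt : t.im = 2*Real.pi/(-L) := by
      rw [ht, Complex.div_ofReal_im]
      norm_num [Complex.mul_im, Complex.mul_re]
      ring
    have himw : w.im = γ.im + a/L := by
      rw [hw, Complex.div_ofReal_im]
      norm_num [Complex.add_im, Complex.mul_im, Complex.sub_im, Complex.sub_re]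
      field_simp
      rw [ha]
    have hnegL : 0 < -L := neg_pos.mpr hL
    have himt0 : 0 < t.im := by rw [himt]; positivity
    -- term bound
    have hterm : ∀ n : ℤ, n ≠ 0 → ‖jacobiTheta₂_term n w t‖ ≤ rexp (1 - c L) * rexp (-|(n:ℝ)|) := by
      intro n hn
      rw [norm_jacobiTheta₂_term, ← Real.exp_add]
      apply Real.exp_le_exp.mpr
      set m : ℝ := |(n:ℝ)| with hm
      have hm1 : 1 ≤ m := by
        rw [hm, ← Int.cast_abs]
        exact_mod_cast Int.one_le_abs (by exact_mod_cast hn)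
      have hm2 : ((n:ℝ))^2 = m^2 := (_root_.sq_abs _).symm
      have hna : (n:ℝ) * a ≤ m * |a| := by
        calc (n:ℝ) * a ≤ |(n:ℝ) * a| := le_abs_self _
        _ = m * |a| := by rw [abs_mul]
      have hg : -((n:ℝ) * γ.im) ≤ m * A := by
        calc -((n:ℝ) * γ.im) ≤ |(n:ℝ) * γ.im| := neg_le_abs _
        _ = m * A := by rw [abs_mul]
      have hε : (0:ℝ) < -L := by linarith
      rw [himt, himw]
      have hstep1 : (n:ℝ) * a - Real.pi * (n:ℝ)^2 ≤ -δ * m := by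
        nlinarith [hδ, hna, mul_le_mul_of_nonneg_left hm2.le Real.pi_pos.le,
          mul_le_mul_of_nonneg_left hm2.ge Real.pi_pos.le,
          mul_nonneg (mul_nonneg Real.pi_pos.le
          (by linarith : (0:ℝ) ≤ m)) (by linarith : (0:ℝ) ≤ m - 1)]
      have expand : -Real.pi * (n:ℝ)^2 * (2*Real.pi/(-L)) - 2*Real.pi*(n:ℝ)*(γ.im + a/L)
          = (2*Real.pi/(-L)) * ((n:ℝ)*a - Real.pi*(n:ℝ)^2) + 2*Real.pi*(-((n:ℝ)*γ.im)) := by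
        field_simp
        ring
      rw [expand]
      have h1 : (2*Real.pi/(-L)) * ((n:ℝ)*a - Real.pi*(n:ℝ)^2) ≤ (2*Real.pi/(-L)) * (-δ * m) :=
        mul_le_mul_of_nonneg_left hstep1 (by positivity)
      have h2 : 2*Real.pi*(-((n:ℝ)*γ.im)) ≤ 2*Real.pi*(m*A) :=
        mul_le_mul_of_nonneg_left hg (by positivity)
      have h3 : (2*Real.pi/(-L)) * (-δ * m) + 2*Real.pi*(m*A) = -(c L) * m := by
        rw [hc]; field_simp; ring
      have h4 : -(c L) * m ≤ 1 - c L + -m := by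
        nlinarith [mul_nonneg (by linarith : (0:ℝ) ≤ c L - 1) (by linarith : (0:ℝ) ≤ m - 1)]
      calc 2*Real.pi/(-L) * ((n:ℝ)*a - Real.pi*(n:ℝ)^2) + 2*Real.pi*(-((n:ℝ)*γ.im))
          ≤ 2*Real.pi/(-L) * (-δ * m) + 2*Real.pi*(m*A) := add_le_add h1 h2
        _ = -(c L) * m := h3
        _ ≤ 1 - c L + -m := h4
    -- summability
    have hb : Summable (fun n : ℤ => rexp (1 - c L) * rexp (-|(n:ℝ)|)) :=
      summable_exp_neg_abs_int.mul_left _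
    have hsum : Summable (fun n : ℤ => jacobiTheta₂_term n w t) :=
      (summable_jacobiTheta₂_term_iff w t).mpr himt0
    have h0 : jacobiTheta₂_term 0 w t = 1 := by
      simp [jacobiTheta₂_term]
    have hsplit : jacobiTheta₂ w t - 1
        = ∑' n : ℤ, (if n = 0 then 0 else jacobiTheta₂_term n w t) := by
      rw [jacobiTheta₂, Summable.tsum_eq_add_tsum_ite hsum 0, h0]
      ring
    rw [hsplit]
    have hsumnorm : Summable (fun n : ℤ => ‖if n = 0 then 0 else jacobiTheta₂_term n w t‖) := by
      apply Summable.of_nonneg_of_le (fun n => norm_nonneg _) _ hb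
      intro n
      by_cases h : n = 0
      · simp [h]; positivity
      · simpa [h] using hterm n h
    calc ‖∑' n : ℤ, (if n = 0 then 0 else jacobiTheta₂_term n w t)‖
        ≤ ∑' n : ℤ, ‖if n = 0 then 0 else jacobiTheta₂_term n w t‖ := norm_tsum_le_tsum_norm hsumnorm
      _ ≤ ∑' n : ℤ, rexp (1 - c L) * rexp (-|(n:ℝ)|) := by
          apply Summable.tsum_le_tsum _ hsumnorm hb
          intro n
          by_cases h : n = 0
          · simp [h]; positivity
          · simpa [h] using hterm n h
      _ = rexp (1 - c L) * K := by rw [hK, tsum_mul_left]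
  -- the bound tends to zero
  have hneg : Filter.Tendsto (fun L : ℝ => -L) (nhdsWithin (0:ℝ) (Set.Iio 0))
      (nhdsWithin (0:ℝ) (Set.Ioi 0)) := by
    rw [tendsto_nhdsWithin_iff]
    constructor
    · simpa using ((continuous_neg.tendsto (0:ℝ)).mono_left nhdsWithin_le_nhds)
    · exact eventually_mem_nhdsWithin.mono (fun y hy => by simpa using hy)
  have hinv : Filter.Tendsto (fun L : ℝ => (-L)⁻¹) (nhdsWithin (0:ℝ) (Set.Iio 0)) atTop :=
    tendsto_inv_nhdsGT_zero.comp hneg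
  have hctop : Filter.Tendsto c (nhdsWithin (0:ℝ) (Set.Iio 0)) atTop := by
    have h5 : Filter.Tendsto (fun L : ℝ => 2*Real.pi*δ * (-L)⁻¹) (nhdsWithin (0:ℝ) (Set.Iio 0))
        atTop := hinv.const_mul_atTop (by positivity)
    have h6 : Filter.Tendsto (fun L : ℝ => 2*Real.pi*δ * (-L)⁻¹ - 2*Real.pi*A)
        (nhdsWithin (0:ℝ) (Set.Iio 0)) atTop := tendsto_atTop_add_const_right _ _ h5
    refine h6.congr (fun L => ?_)
    simp only [hc, div_eq_mul_inv]
  have hbound0 : Filter.Tendsto (fun L : ℝ => rexp (1 - c L) * K)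
      (nhdsWithin (0:ℝ) (Set.Iio 0)) (nhds 0) := by
    have h7 : Filter.Tendsto (fun L : ℝ => 1 - c L) (nhdsWithin (0:ℝ) (Set.Iio 0)) atBot := by
      have h := tendsto_atBot_add_const_right (nhdsWithin (0:ℝ) (Set.Iio 0)) 1
        (tendsto_neg_atBot_iff.mpr hctop)
      exact h.congr (fun L => by ring)
    have := (Real.tendsto_exp_atBot.comp h7).mul_const K
    simpa using this
  rw [tendsto_iff_norm_sub_tendsto_zero]
  apply squeeze_zero' (Filter.Eventually.of_forall (fun L => norm_nonneg _)) _ hbound0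
  filter_upwards [eventually_mem_nhdsWithin, hctop.eventually_ge_atTop 1] with L hL hcL
  exact key L hL hcL

/-- for `-π < arg x < π`, `θ_q(q^β x)/θ_q(q^α x) → x^{α-β}` as `q → 1⁻`. -/
theorem jTheta_ratio_tendsto (α β : ℂ) (x : ℂ) (hx : x ∈ Complex.slitPlane) :
    Tendsto (fun q : ℝ => jTheta q (qcpow q β * x) / jTheta q (qcpow q α * x))
      (𝓝[Set.Ioo (0 : ℝ) 1] 1) (𝓝 (x ^ (α - β))) := by
  have hx0 : x ≠ 0 := Complex.slitPlane_ne_zero hx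
  let Λ : ℂ := Complex.log x
  let E : ℝ → ℂ := fun L => Complex.exp ((α - β) * ((α + β - 1) * (L:ℂ)/2 + Λ))
  let Θ : ℂ → ℝ → ℂ := fun γ L => jacobiTheta₂ (((γ - 1/2) * (L:ℂ) + Λ) / (L:ℂ))
      (-2*(Real.pi:ℂ)*I/(L:ℂ))
  have hlog : Tendsto Real.log (𝓝[Set.Ioo (0:ℝ) 1] 1) (𝓝[<] (0:ℝ)) := by
    rw [tendsto_nhdsWithin_iff]
    constructor
    · have h := (Real.continuousAt_log one_ne_zero).tendsto
      rw [Real.log_one] at h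
      exact h.mono_left nhdsWithin_le_nhds
    · exact eventually_mem_nhdsWithin.mono (fun q hq => Real.log_neg hq.1 hq.2)
  have hEt : Tendsto E (𝓝[<] (0:ℝ)) (𝓝 (x ^ (α - β))) := by
    have hcont : Continuous E := by
      apply Complex.continuous_exp.comp
      fun_prop
    have h : Tendsto E (𝓝[Set.Iio (0:ℝ)] 0) (𝓝 (E 0)) :=
      (hcont.tendsto 0).mono_left nhdsWithin_le_nhds
    have hval : E 0 = x ^ (α - β) := by
      show Complex.exp ((α - β) * ((α + β - 1) * ((0:ℝ):ℂ)/2 + Λ)) = _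
      rw [Complex.cpow_def_of_ne_zero hx0]
      norm_num
      ring_nf
      rfl
    rwa [hval] at h
  have hΘt : Tendsto (fun L => Θ β L / Θ α L) (𝓝[<] (0:ℝ)) (𝓝 1) := by
    have h := (theta_lim β x hx).div (theta_lim α x hx) one_ne_zero
    rw [div_one] at h
    exact h
  have hGt : Tendsto (fun L => E L * (Θ β L / Θ α L)) (𝓝[<] (0:ℝ)) (𝓝 (x ^ (α - β))) := by
    have h := hEt.mul hΘt
    rwa [mul_one] at h
  refine Tendsto.congr' ?_ (hGt.comp hlog)
  filter_upwards [eventually_mem_nhdsWithin] with q hq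
  -- now prove the pointwise identity
  set L : ℝ := Real.log q with hLdef
  have hL : L < 0 := Real.log_neg hq.1 hq.2
  have hL0 : (L:ℂ) ≠ 0 := by exact_mod_cast ne_of_lt hL
  have hπ : (Real.pi:ℂ) ≠ 0 := by exact_mod_cast Real.pi_ne_zero
  have h2πI : (2:ℂ) * Real.pi * I ≠ 0 := by
    simp [hπ, I_ne_zero]
  set T : ℂ := (L:ℂ) / (2*Real.pi*I) with hT
  have hTne : -I * T ≠ 0 := by
    refine mul_ne_zero (neg_ne_zero.mpr I_ne_zero) ?_
    rw [hT]
    exact div_ne_zero hL0 h2πI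
  set P : ℂ := 1 / (-I * T) ^ ((1:ℂ)/2) with hP
  have hPne : P ≠ 0 := by
    rw [hP]
    apply one_div_ne_zero
    simp only [ne_eq, Complex.cpow_eq_zero_iff, not_and_or, not_ne_iff]
    exact Or.inl hTne
  set Z : ℂ → ℂ := fun γ => ((γ - 1/2) * (L:ℂ) + Λ) / (2*Real.pi*I) with hZ
  have step1 : ∀ γ : ℂ, jTheta q (qcpow q γ * x) = jacobiTheta₂ (Z γ) T :=
    fun γ => tsum_congr (fun n => term_eq q hq γ x hx0 n)
  have hdivT : ∀ γ : ℂ, Z γ / T = ((γ - 1/2) * (L:ℂ) + Λ) / (L:ℂ) := by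
    intro γ
    rw [hZ, hT]
    field_simp
  have hinvT : -1 / T = -2*(Real.pi:ℂ)*I/(L:ℂ) := by
    rw [hT]
    field_simp
  have step2 : ∀ γ : ℂ, jTheta q (qcpow q γ * x)
      = P * (Complex.exp (-Real.pi * I * (Z γ)^2 / T) * Θ γ L) := by
    intro γ
    rw [step1 γ, jacobiTheta₂_functional_equation (Z γ) T, hdivT γ, hinvT, mul_assoc]
  have hexpdiff : Complex.exp (-Real.pi * I * (Z β)^2 / T) / Complex.exp (-Real.pi * I * (Z α)^2 / T)
      = E L := by
    rw [← Complex.exp_sub]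
    show _ = Complex.exp ((α - β) * ((α + β - 1) * (L:ℂ)/2 + Λ))
    congr 1
    rw [hZ, hT]
    field_simp
    ring
  show E (Real.log q) * (Θ β (Real.log q) / Θ α (Real.log q)) = _
  rw [step2 β, step2 α, mul_div_mul_left _ _ hPne, mul_div_mul_comm, hexpdiff]
end

section
/- Let α, β ∈ ℂ and let x ∈ ℂ with x ∉ (−∞, 0] (i.e. −π < arg x < π). Then lim_{q→1⁻} [θ_q(q^α x/(1−q)) / θ_q(q^β x/(1−q))] · (1−q)^{β−α} = x^{β−α}, where q^α = exp(α log q), (1−q)^{β−α} = exp((β−α) log(1−q)), and x^{β−α} = exp((β−α) Log x) with the principal logarithm. -/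
open Complex Filter Topology

set_option maxHeartbeats 1000000 in
/-- Bound on `jacobiTheta₂` minus 1. -/
lemma theta2_sub_one_bound {z τ : ℂ} (hτ : 0 < τ.im)
    (hr : Real.exp (Real.pi * (2 * |z.im| - τ.im)) ≤ 1/2) :
    ‖jacobiTheta₂ z τ - 1‖ ≤ 4 * Real.exp (Real.pi * (2 * |z.im| - τ.im)) := by
  set r := Real.exp (Real.pi * (2 * |z.im| - τ.im)) with hrdef
  have hr0 : 0 < r := Real.exp_pos _
  have hr1 : r < 1 := lt_of_le_of_lt hr (by norm_num)
  have hsum : Summable (jacobiTheta₂_term · z τ) := (summable_jacobiTheta₂_term_iff z τ).mpr hτ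
  have hterm : ∀ n : ℤ, ‖jacobiTheta₂_term n z τ‖ ≤ r ^ n.natAbs := by
    intro n
    rw [norm_jacobiTheta₂_term, hrdef, ← Real.exp_nat_mul, Real.exp_le_exp]
    have h1 : ((n.natAbs : ℝ)) = |(n:ℝ)| := by simp [Nat.cast_natAbs]
    have h2 : (n:ℝ)^2 = |(n:ℝ)|^2 := (_root_.sq_abs _).symm
    have h3 : -(n:ℝ) * z.im ≤ |(n:ℝ)| * |z.im| := by
      calc -(n:ℝ) * z.im ≤ |(-(n:ℝ)) * z.im| := le_abs_self _
      _ = |(n:ℝ)| * |z.im| := by rw [abs_mul, abs_neg]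
    have h4 : |(n:ℝ)| ≤ |(n:ℝ)|^2 := by
      rcases eq_or_ne n 0 with h | h
      · simp [h]
      · nlinarith [(by exact_mod_cast Int.one_le_abs h : (1:ℝ) ≤ |(n:ℝ)|)]
    have hA := mul_le_mul_of_nonneg_left h3 (by positivity : (0:ℝ) ≤ 2*Real.pi)
    have hB := mul_le_mul_of_nonneg_left h4 (mul_nonneg Real.pi_pos.le hτ.le)
    rw [h1, h2]
    linarith [hA, hB]
  have hinj1 : Function.Injective (fun n : ℕ => (n : ℤ)) := by
    intro a b h; simp only at h; omega
  have hinj2 : Function.Injective (fun n : ℕ => (-((n:ℤ)+1))) := by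
    intro a b h; simp only at h; omega
  have hsumN : Summable (fun n : ℕ => jacobiTheta₂_term (n : ℤ) z τ) :=
    hsum.comp_injective hinj1
  have hsumN2 : Summable (fun n : ℕ => jacobiTheta₂_term (-((n:ℤ)+1)) z τ) :=
    hsum.comp_injective hinj2
  have hgeo : HasSum (fun n : ℕ => r ^ (n+1)) (r * (1-r)⁻¹) := by
    have := (hasSum_geometric_of_lt_one hr0.le hr1).mul_left r
    simpa [pow_succ'] using this
  have hpos : ‖∑' n : ℕ, jacobiTheta₂_term ((n:ℤ)+1) z τ‖ ≤ r * (1-r)⁻¹ := by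
    refine tsum_of_norm_bounded hgeo fun n => ?_
    have := hterm ((n:ℤ)+1)
    have hna : (((n:ℤ)+1)).natAbs = n + 1 := by omega
    rwa [hna] at this
  have hneg : ‖∑' n : ℕ, jacobiTheta₂_term (-((n:ℤ)+1)) z τ‖ ≤ r * (1-r)⁻¹ := by
    refine tsum_of_norm_bounded hgeo fun n => ?_
    have := hterm (-((n:ℤ)+1))
    have hna : ((-((n:ℤ)+1))).natAbs = n + 1 := by omega
    rwa [hna] at this
  have hdecomp : jacobiTheta₂ z τ =
      (∑' n : ℕ, jacobiTheta₂_term (n : ℤ) z τ) + ∑' n : ℕ, jacobiTheta₂_term (-((n:ℤ)+1)) z τ :=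
    tsum_of_nat_of_neg_add_one hsumN hsumN2
  have hzero : (∑' n : ℕ, jacobiTheta₂_term (n : ℤ) z τ)
      = 1 + ∑' n : ℕ, jacobiTheta₂_term ((n:ℤ)+1) z τ := by
    rw [Summable.tsum_eq_zero_add hsumN]
    norm_num [jacobiTheta₂_term]
  have hkey : jacobiTheta₂ z τ - 1 =
      (∑' n : ℕ, jacobiTheta₂_term ((n:ℤ)+1) z τ) + ∑' n : ℕ, jacobiTheta₂_term (-((n:ℤ)+1)) z τ := by
    rw [hdecomp, hzero]; ring
  rw [hkey]
  refine le_trans (norm_add_le _ _) ?_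
  have h2 : (1-r)⁻¹ ≤ 2 := by
    rw [inv_le_comm₀ (by linarith) (by norm_num)]
    linarith
  have := add_le_add hpos hneg
  nlinarith

/-- If `im τ - 2|im z|` tends to infinity then `jacobiTheta₂ z τ` tends to `1`. -/
lemma theta2_tendsto_one {ι : Type*} {l : Filter ι} {f g : ι → ℂ}
    (h : Tendsto (fun i => (g i).im - 2 * |(f i).im|) l atTop) :
    Tendsto (fun i => jacobiTheta₂ (f i) (g i)) l (𝓝 1) := by
  have hatbot : Tendsto (fun i => Real.pi * (2 * |(f i).im| - (g i).im)) l atBot := by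
    have h1 : Tendsto (fun i => Real.pi * ((g i).im - 2 * |(f i).im|)) l atTop :=
      h.const_mul_atTop Real.pi_pos
    have h2 : Tendsto (fun i => -(Real.pi * ((g i).im - 2 * |(f i).im|))) l atBot :=
      tendsto_neg_atBot_iff.mpr h1
    refine h2.congr fun i => by ring
  have hr : Tendsto (fun i => Real.exp (Real.pi * (2 * |(f i).im| - (g i).im))) l (𝓝 0) :=
    Real.tendsto_exp_atBot.comp hatbot
  have hev1 : ∀ᶠ i in l, (1:ℝ) ≤ (g i).im - 2 * |(f i).im| := h.eventually_ge_atTop 1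
  have hev2 : ∀ᶠ i in l, Real.exp (Real.pi * (2 * |(f i).im| - (g i).im)) ≤ 1/2 :=
    hr.eventually (eventually_le_nhds (by norm_num))
  have hbound : ∀ᶠ i in l, ‖jacobiTheta₂ (f i) (g i) - 1‖ ≤
      4 * Real.exp (Real.pi * (2 * |(f i).im| - (g i).im)) := by
    filter_upwards [hev1, hev2] with i h1 h2
    exact theta2_sub_one_bound (by nlinarith [abs_nonneg (f i).im]) h2
  have hz : Tendsto (fun i => jacobiTheta₂ (f i) (g i) - 1) l (𝓝 0) := by
    refine squeeze_zero_norm' hbound ?_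
    simpa using hr.const_mul (4:ℝ)
  simpa using hz.add (tendsto_const_nhds (x := (1:ℂ)))

set_option maxHeartbeats 4000000 in
/-- for `-π < arg x < π`,
`[θ_q(q^α x/(1-q)) / θ_q(q^β x/(1-q))] · (1-q)^{β-α} → x^{β-α}` as `q → 1⁻`. -/
theorem jTheta_ratio_scaled_tendsto (α β : ℂ) (x : ℂ) (hx : x ∈ Complex.slitPlane) :
    Tendsto
      (fun q : ℝ =>
        jTheta q (qcpow q α * x / (1 - (q : ℂ))) / jTheta q (qcpow q β * x / (1 - (q : ℂ))) *
          Complex.exp ((β - α) * (Real.log (1 - q) : ℂ)))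
      (𝓝[Set.Ioo (0 : ℝ) 1] 1) (𝓝 (x ^ (β - α))) := by
  have hx0 : x ≠ 0 := Complex.slitPlane_ne_zero hx
  set Lx := Complex.log x with hLxdef
  have hargx : |Lx.im| < Real.pi := by
    rw [hLxdef, Complex.log_im]
    exact abs_lt.mpr ⟨Complex.neg_pi_lt_arg x, lt_of_le_of_ne (Complex.arg_le_pi x)
      (Complex.slitPlane_arg_ne_pi hx)⟩
  set L := 𝓝[Set.Ioo (0:ℝ) 1] (1:ℝ) with hLdef
  set W : ℂ → ℝ → ℂ :=
    fun γ q => γ + (Lx - (Real.log (1-q) : ℂ)) / (Real.log q : ℂ) - 1/2 with hWdef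
  set σ : ℝ → ℂ := fun q => ((-2 * Real.pi / Real.log q : ℝ) : ℂ) * Complex.I with hσdef
  have hmem : ∀ᶠ q in L, q ∈ Set.Ioo (0:ℝ) 1 := eventually_mem_nhdsWithin
  have hlog0 : Tendsto (fun q : ℝ => Real.log q) L (𝓝 0) := by
    have := (Real.continuousAt_log (one_ne_zero)).tendsto
    rw [Real.log_one] at this
    exact this.mono_left nhdsWithin_le_nhds
  have hneg : Tendsto (fun q : ℝ => -Real.log q) L (𝓝[>] 0) := by
    rw [tendsto_nhdsWithin_iff]
    constructor
    · simpa using hlog0.neg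
    · filter_upwards [hmem] with q hq
      simpa using Real.log_neg hq.1 hq.2
  have hinv : Tendsto (fun q : ℝ => (-Real.log q)⁻¹) L atTop :=
    tendsto_inv_nhdsGT_zero.comp hneg
  have hWim : ∀ γ : ℂ, ∀ q : ℝ, (W γ q).im = γ.im + Lx.im / Real.log q := by
    intro γ q
    simp [hWdef, Complex.div_ofReal_im]
  have hσim : ∀ q : ℝ, (σ q).im = -2 * Real.pi / Real.log q := by
    intro q
    simp [hσdef]
  have hcond : ∀ γ : ℂ, Tendsto (fun q => (σ q).im - 2 * |(W γ q).im|) L atTop := by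
    intro γ
    have hpos : 0 < 2 * Real.pi - 2 * |Lx.im| := by linarith [hargx]
    have htop : Tendsto (fun q : ℝ =>
        (2 * Real.pi - 2 * |Lx.im|) * (-Real.log q)⁻¹ - 2 * |γ.im|) L atTop :=
      tendsto_atTop_add_const_right _ _ (hinv.const_mul_atTop hpos)
    refine tendsto_atTop_mono' L ?_ htop
    filter_upwards [hmem] with q hq
    have hl : Real.log q < 0 := Real.log_neg hq.1 hq.2
    have h1 : |Lx.im / Real.log q| = |Lx.im| / (-Real.log q) := by
      rw [abs_div, abs_of_neg hl]
    have h2 : |(W γ q).im| ≤ |γ.im| + |Lx.im| / (-Real.log q) := by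
      rw [hWim γ q]
      refine (abs_add_le _ _).trans ?_
      rw [h1]
    rw [hσim q]
    have h3 : -2 * Real.pi / Real.log q = 2 * Real.pi * (-Real.log q)⁻¹ := by
      rw [inv_neg]; field_simp
    have h4 : |Lx.im| / (-Real.log q) = |Lx.im| * (-Real.log q)⁻¹ := div_eq_mul_inv _ _
    rw [h3]
    rw [h4] at h2
    nlinarith [h2, inv_pos.mpr (neg_pos.mpr hl)]
  have hΘ : ∀ γ : ℂ, Tendsto (fun q => jacobiTheta₂ (W γ q) (σ q)) L (𝓝 1) :=
    fun γ => theta2_tendsto_one (hcond γ)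
  have hcast : Tendsto (fun q : ℝ => ((Real.log q : ℝ) : ℂ)) L (𝓝 0) := by
    have := Complex.continuous_ofReal.tendsto (0:ℝ)
    exact (by simpa [Function.comp_def] using this.comp hlog0)
  have c1 : Tendsto (fun q : ℝ => Complex.exp ((β-α)*(α+β-1)/2 * ((Real.log q : ℝ):ℂ))) L (𝓝 1) := by
    have h0 : Tendsto (fun q : ℝ => (β-α)*(α+β-1)/2 * ((Real.log q : ℝ):ℂ)) L (𝓝 0) := by
      simpa using hcast.const_mul ((β-α)*(α+β-1)/2)
    have := (Complex.continuous_exp.tendsto 0).comp h0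
    simpa [Function.comp_def] using this
  have hratio : Tendsto (fun q => jacobiTheta₂ (W α q) (σ q) / jacobiTheta₂ (W β q) (σ q))
      L (𝓝 1) := by
    have := (hΘ α).div (hΘ β) one_ne_zero
    simpa [Pi.div_def] using this
  have hG : Tendsto (fun q : ℝ =>
      Complex.exp ((β-α)*(α+β-1)/2 * ((Real.log q : ℝ):ℂ)) * Complex.exp ((β-α)*Lx) *
        (jacobiTheta₂ (W α q) (σ q) / jacobiTheta₂ (W β q) (σ q))) L (𝓝 (x ^ (β-α))) := by
    have := (c1.mul (tendsto_const_nhds (x := Complex.exp ((β-α)*Lx)))).mul hratio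
    simp only [one_mul, mul_one] at this
    have hxpow : x ^ (β-α) = Complex.exp ((β-α)*Lx) := by
      rw [Complex.cpow_def_of_ne_zero hx0, mul_comm]
    rw [hxpow]
    exact this
  refine hG.congr' ?_
  filter_upwards [hmem, (hΘ β).eventually_ne one_ne_zero] with q hq hΘβ
  obtain ⟨hq0, hq1⟩ := hq
  have hl : Real.log q < 0 := Real.log_neg hq0 hq1
  have hlne : ((Real.log q : ℝ):ℂ) ≠ 0 := Complex.ofReal_ne_zero.mpr hl.ne
  have hπ : ((Real.pi : ℝ):ℂ) ≠ 0 := Complex.ofReal_ne_zero.mpr Real.pi_ne_zero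
  set τq : ℂ := ((-Real.log q/(2*Real.pi) : ℝ):ℂ) * Complex.I with hτdefn
  have hτne : τq ≠ 0 := by
    rw [hτdefn]
    apply mul_ne_zero _ Complex.I_ne_zero
    rw [Complex.ofReal_ne_zero]
    exact div_ne_zero (ne_of_gt (by linarith)) (by positivity)
  have hστ : σ q = -1/τq := by
    rw [eq_div_iff hτne, hσdef, hτdefn]
    push_cast
    field_simp
    ring_nf
    rw [Complex.I_sq]
  have hZW : ∀ γ : ℂ, (W γ q * τq) / τq = W γ q := fun γ => mul_div_cancel_right₀ _ hτne
  have hE : ∀ γ : ℂ, -(Real.pi:ℂ)*Complex.I*(W γ q * τq)^2/τq =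
      -((Real.log q : ℝ):ℂ)/2 * (W γ q)^2 := by
    intro γ
    rw [hτdefn]
    push_cast
    field_simp
    ring_nf
    rw [Complex.I_sq]
    ring
  -- the theta sums are Jacobi theta₂ values
  have hjt : ∀ γ : ℂ, jTheta q (qcpow q γ * x / (1 - (q:ℂ))) = jacobiTheta₂ (W γ q * τq) τq := by
    intro γ
    have hq' : (q:ℂ) = Complex.exp ((Real.log q : ℝ):ℂ) := by
      rw [← Complex.ofReal_exp, Real.exp_log hq0]
    have h1q : 1 - (q:ℂ) = Complex.exp ((Real.log (1-q) : ℝ):ℂ) := by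
      rw [← Complex.ofReal_exp, Real.exp_log (by linarith)]
      push_cast; ring
    have hy : qcpow q γ * x / (1-(q:ℂ)) =
        Complex.exp (γ*((Real.log q:ℝ):ℂ) + Lx - ((Real.log (1-q):ℝ):ℂ)) := by
      rw [qcpow, h1q, hLxdef, Complex.exp_sub, Complex.exp_add, Complex.exp_log hx0]
    rw [jTheta, jacobiTheta₂, hy]
    refine tsum_congr fun n => ?_
    have hd : (2:ℤ) ∣ n*(n-1) := by
      have h := Int.even_mul_succ_self (n-1)
      have : Even (n*(n-1)) := by
        rw [mul_comm]
        simpa using h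
      exact this.two_dvd
    have h2' : (((n*(n-1)/2 : ℤ)):ℂ)*2 = (n:ℂ)*((n:ℂ)-1) := by
      have h := Int.ediv_mul_cancel hd
      exact_mod_cast congrArg (fun z : ℤ => (z:ℂ)) h
    have hk : (((n*(n-1)/2 : ℤ)):ℂ) = ((n:ℂ)^2-(n:ℂ))/2 := by linear_combination h2'/2
    rw [hq', ← Complex.exp_int_mul, ← Complex.exp_int_mul, ← Complex.exp_add]
    rw [jacobiTheta₂_term]
    congr 1
    rw [hk, hWdef, hτdefn]
    push_cast
    field_simp
    ring_nf
    rw [Complex.I_sq]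
    ring
  rw [hjt α, hjt β]
  -- now the functional equation and the explicit algebra
  set A : ℂ := (β-α)*(α+β-1)/2 * ((Real.log q : ℝ):ℂ) with hA
  set B : ℂ := (β-α)*Lx with hB
  set c : ℂ := (β - α) * ((Real.log (1-q) : ℝ):ℂ) with hc
  set D : ℂ := (-Complex.I * τq) ^ ((1:ℂ)/2) with hD
  have hDne : D ≠ 0 := by
    rw [hD]
    intro h
    rcases (Complex.cpow_eq_zero_iff _ _).mp h with ⟨h1, -⟩
    exact mul_ne_zero (neg_ne_zero.mpr Complex.I_ne_zero) hτne h1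
  have hFE : ∀ δ : ℂ, jacobiTheta₂ (W δ q * τq) τq =
      1/D * Complex.exp (-((Real.log q : ℝ):ℂ)/2 * (W δ q)^2) * jacobiTheta₂ (W δ q) (σ q) := by
    intro δ
    rw [jacobiTheta₂_functional_equation (W δ q * τq) τq, hZW δ, ← hστ, hD]
    rw [hE δ]
  have hkey : -((Real.log q:ℝ):ℂ)/2*(W α q)^2 =
      -((Real.log q:ℝ):ℂ)/2*(W β q)^2 + (A + B - c) := by
    rw [hWdef, hA, hB, hc]
    field_simp
    ring
  have hEab : Complex.exp (-((Real.log q : ℝ):ℂ)/2 * (W α q)^2) =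
      Complex.exp (-((Real.log q : ℝ):ℂ)/2 * (W β q)^2) * Complex.exp (A + B - c) := by
    rw [← Complex.exp_add]
    exact congrArg Complex.exp (by linear_combination hkey)
  rw [hFE α, hFE β, hEab]
  set Θα := jacobiTheta₂ (W α q) (σ q)
  set Θβ := jacobiTheta₂ (W β q) (σ q)
  set Eβ := Complex.exp (-((Real.log q : ℝ):ℂ)/2 * (W β q)^2) with hEβ
  have hEβne : Eβ ≠ 0 := Complex.exp_ne_zero _
  have hexp : Complex.exp (A + B - c) * Complex.exp c = Complex.exp A * Complex.exp B := by
    rw [← Complex.exp_add, ← Complex.exp_add]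
    congr 1
    ring
  field_simp
  linear_combination (-Θα) * hexp
end
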